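/- Let r₀ := (4ρ)^{−1}. Then for every γ ∈ Γ with ‖γ‖_Γ ≤ r₀, the equation x = G_γ(x) has a unique solution x = x(γ) in the closed ball {x ∈ X : ‖x‖_X ≤ 2r₀}. -/

import Mathlib

open MeasureTheory Complex Real Filter Set

noncomputable section

/-- Lebesgue measure on the interval `(0, 1)`. -/
def mu01 : Measure ℝ := volume.restrict (Set.Ioo (0 : ℝ) 1)

/-- `convPow conv x k` is the `(k+1)`-fold convolution power `x^{∗(k+1)}`. -/
def convPow {X : Type*} (conv : X → X → X) (x : X) : ℕ → X
  | 0 => x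
  | k + 1 => conv x (convPow conv x k)

/-- The Γ-norm `‖γ‖_Γ = ‖a₀‖ + Σ_{k≥1} ‖a_k‖/(k-1)!` of a sequence `γ = (a_k)_{k≥0}`. -/
def gammaNorm {X : Type*} [NormedAddCommGroup X] (a : ℕ → X) : ℝ :=
  ‖a 0‖ + ∑' k : ℕ, ‖a (k + 1)‖ / (Nat.factorial k : ℝ)

/-- The nonlinear map
`G_γ(x) = Σ_{k≥1} (-1)^k x^{∗(2k+1)}/(2k+1)! - a₀ - Σ_{k≥1} a_k ∗ x^{∗k}/k!`. -/
def Gmap {X : Type*} [NormedAddCommGroup X] [NormedSpace ℂ X]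
    (conv : X → X → X) (a : ℕ → X) (x : X) : X :=
  (∑' k : ℕ, (((-1 : ℂ) ^ (k + 1)) / (Nat.factorial (2 * k + 3) : ℂ)) • convPow conv x (2 * k + 2))
    - a 0 - ∑' k : ℕ, ((Nat.factorial (k + 1) : ℂ))⁻¹ • conv (a (k + 1)) (convPow conv x k)

section Aux

variable {X : Type*} [NormedAddCommGroup X] [NormedSpace ℂ X]
variable (conv : X →ₗ[ℂ] X →ₗ[ℂ] X) {ρ : ℝ}

lemma convPow_zero_eq (k : ℕ) : convPow (fun u v : X => conv u v) 0 k = 0 := by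
  induction k with
  | zero => rfl
  | succ k ih => simp [convPow, ih]

lemma convPow_norm_le (hρ : 0 < ρ) (hbound : ∀ f g : X, ‖conv f g‖ ≤ ρ * ‖f‖ * ‖g‖)
    (x : X) : ∀ k, ‖convPow (fun u v : X => conv u v) x k‖ ≤ ‖x‖ * (ρ * ‖x‖) ^ k := by
  intro k
  induction k with
  | zero => simp [convPow]
  | succ k ih =>
    calc ‖convPow (fun u v : X => conv u v) x (k + 1)‖
        ≤ ρ * ‖x‖ * ‖convPow (fun u v : X => conv u v) x k‖ := hbound _ _
      _ ≤ ρ * ‖x‖ * (‖x‖ * (ρ * ‖x‖) ^ k) := by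
          apply mul_le_mul_of_nonneg_left ih (by positivity)
      _ = ‖x‖ * (ρ * ‖x‖) ^ (k + 1) := by ring

lemma convPow_sub_le (hρ : 0 < ρ) (hbound : ∀ f g : X, ‖conv f g‖ ≤ ρ * ‖f‖ * ‖g‖)
    {R : ℝ} (hR : 0 ≤ R) {x y : X} (hx : ‖x‖ ≤ R) (hy : ‖y‖ ≤ R) :
    ∀ k, ‖convPow (fun u v : X => conv u v) x k - convPow (fun u v : X => conv u v) y k‖
      ≤ (k + 1) * (ρ * R) ^ k * ‖x - y‖ := by
  intro k
  induction k with
  | zero => simp [convPow]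
  | succ k ih =>
    have hPy : ‖convPow (fun u v : X => conv u v) y k‖ ≤ R * (ρ * R) ^ k := by
      calc ‖convPow (fun u v : X => conv u v) y k‖ ≤ ‖y‖ * (ρ * ‖y‖) ^ k :=
            convPow_norm_le conv hρ hbound y k
        _ ≤ R * (ρ * R) ^ k := by gcongr
    have hsplit : convPow (fun u v : X => conv u v) x (k + 1)
        - convPow (fun u v : X => conv u v) y (k + 1)
        = conv x (convPow (fun u v : X => conv u v) x k
            - convPow (fun u v : X => conv u v) y k)
          + conv (x - y) (convPow (fun u v : X => conv u v) y k) := by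
      simp only [convPow, map_sub, LinearMap.sub_apply]
      abel
    calc ‖convPow (fun u v : X => conv u v) x (k + 1)
          - convPow (fun u v : X => conv u v) y (k + 1)‖
        ≤ ‖conv x (convPow (fun u v : X => conv u v) x k
            - convPow (fun u v : X => conv u v) y k)‖
          + ‖conv (x - y) (convPow (fun u v : X => conv u v) y k)‖ := by
          rw [hsplit]; exact norm_add_le _ _
      _ ≤ ρ * ‖x‖ * ‖convPow (fun u v : X => conv u v) x k
            - convPow (fun u v : X => conv u v) y k‖
          + ρ * ‖x - y‖ * ‖convPow (fun u v : X => conv u v) y k‖ := by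
          exact add_le_add (hbound _ _) (hbound _ _)
      _ ≤ ρ * R * ((k + 1) * (ρ * R) ^ k * ‖x - y‖)
          + ρ * ‖x - y‖ * (R * (ρ * R) ^ k) := by
          gcongr
      _ = ((k : ℝ) + 1 + 1) * (ρ * R) ^ (k + 1) * ‖x - y‖ := by ring
      _ = ((k + 1 : ℕ) + 1) * (ρ * R) ^ (k + 1) * ‖x - y‖ := by push_cast; ring

end Aux

/-- **Fixed point lemma.** With `r₀ = (4ρ)⁻¹`, for every `γ ∈ Γ` with `‖γ‖_Γ ≤ r₀` the
equation `x = G_γ(x)` has a unique solution in the closed ball `{‖x‖ ≤ 2r₀}`. -/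
theorem Gmap_fixed_point
    {X : Type*} [NormedAddCommGroup X] [NormedSpace ℂ X] [CompleteSpace X]
    -- `X` is continuously embedded in `L¹(0,1)`
    (ι : X →L[ℂ] Lp ℂ 1 mu01) (hι : Function.Injective ι)
    -- `X` is an algebra with respect to cyclic convolution
    (conv : X →ₗ[ℂ] X →ₗ[ℂ] X)
    (hconv : ∀ f g : X, (ι (conv f g) : ℝ → ℂ)
      =ᵐ[mu01] fun x => ∫ t, (ι f : ℝ → ℂ) (Int.fract (x - t)) * (ι g : ℝ → ℂ) t ∂mu01)
    (ρ : ℝ) (hρ : 0 < ρ) (hbound : ∀ f g : X, ‖conv f g‖ ≤ ρ * ‖f‖ * ‖g‖)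
    -- `γ = (a_k)_{k≥0} ∈ Γ` with `‖γ‖_Γ ≤ r₀ = (4ρ)⁻¹`
    (a : ℕ → X) (ha : Summable (fun k : ℕ => ‖a (k + 1)‖ / (Nat.factorial k : ℝ)))
    (hγ : gammaNorm a ≤ (4 * ρ)⁻¹) :
    ∃! x : X, ‖x‖ ≤ 2 * (4 * ρ)⁻¹ ∧ x = Gmap (fun u v => conv u v) a x := by
  classical
  set R : ℝ := 2 * (4 * ρ)⁻¹ with hRdef
  have hR0 : 0 < R := by positivity
  have hρR : ρ * R = 1 / 2 := by rw [hRdef]; field_simp; ring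
  have hr0 : (4 * ρ)⁻¹ = R / 2 := by rw [hRdef]; ring
  set S : ℝ := ∑' k : ℕ, ‖a (k + 1)‖ / (Nat.factorial k : ℝ) with hSdef
  have hS0 : 0 ≤ S := tsum_nonneg fun k => by positivity
  have hSle : S ≤ (4 * ρ)⁻¹ := by
    have h := hγ; rw [gammaNorm] at h
    have := norm_nonneg (a 0); rw [← hSdef] at h; linarith
  have ha0 : ‖a 0‖ ≤ (4 * ρ)⁻¹ := by
    have h := hγ; rw [gammaNorm, ← hSdef] at h; linarith
  -- abbreviations
  set f1 : X → ℕ → X := fun x k =>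
    (((-1 : ℂ) ^ (k + 1)) / (Nat.factorial (2 * k + 3) : ℂ)) •
      convPow (fun u v : X => conv u v) x (2 * k + 2) with hf1def
  set f2 : X → ℕ → X := fun x k =>
    ((Nat.factorial (k + 1) : ℂ))⁻¹ • conv (a (k + 1)) (convPow (fun u v : X => conv u v) x k)
    with hf2def
  have hGm : ∀ x : X, Gmap (fun u v => conv u v) a x
      = (∑' k, f1 x k) - a 0 - ∑' k, f2 x k := fun x => rfl
  -- norms of the scalar coefficients
  have hc1 : ∀ k : ℕ, ‖((-1 : ℂ) ^ (k + 1)) / (Nat.factorial (2 * k + 3) : ℂ)‖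
      = ((Nat.factorial (2 * k + 3) : ℝ))⁻¹ := by
    intro k
    rw [norm_div, norm_pow, norm_neg, norm_one, one_pow, Complex.norm_natCast]
    simp [one_div]
  have hc2 : ∀ k : ℕ, ‖((Nat.factorial (k + 1) : ℂ))⁻¹‖ = ((Nat.factorial (k + 1) : ℝ))⁻¹ := by
    intro k; rw [norm_inv, Complex.norm_natCast]
  -- pointwise norm bound on convPow inside the ball
  have hP : ∀ x : X, ‖x‖ ≤ R → ∀ k,
      ‖convPow (fun u v : X => conv u v) x k‖ ≤ R * (1 / 2) ^ k := by
    intro x hx k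
    calc ‖convPow (fun u v : X => conv u v) x k‖ ≤ ‖x‖ * (ρ * ‖x‖) ^ k :=
          convPow_norm_le conv hρ hbound x k
      _ ≤ R * (ρ * R) ^ k := by gcongr
      _ = R * (1 / 2) ^ k := by rw [hρR]
  -- summability
  have hgeo14 : Summable (fun k : ℕ => (1 / 4 : ℝ) ^ k) :=
    summable_geometric_of_lt_one (by norm_num) (by norm_num)
  have hs1 : ∀ x : X, ‖x‖ ≤ R → Summable (f1 x) := by
    intro x hx
    apply Summable.of_norm_bounded (g := fun k => (R * (1 / 4)) * (1 / 4 : ℝ) ^ k)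
      (hgeo14.mul_left _)
    intro k
    rw [hf1def, norm_smul, hc1]
    calc ((Nat.factorial (2 * k + 3) : ℝ))⁻¹ * ‖convPow (fun u v : X => conv u v) x (2 * k + 2)‖
        ≤ 1 * (R * (1 / 2) ^ (2 * k + 2)) := by
          apply mul_le_mul _ (hP x hx _) (norm_nonneg _) (by norm_num)
          rw [inv_le_one_iff₀]
          right
          exact_mod_cast Nat.one_le_iff_ne_zero.mpr (Nat.factorial_ne_zero _)
      _ = (R * (1 / 4)) * (1 / 4 : ℝ) ^ k := by
          rw [show 2 * k + 2 = 2 * (k + 1) by ring, pow_mul]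
          norm_num [pow_succ]
          ring
  have hs2 : ∀ x : X, ‖x‖ ≤ R → Summable (f2 x) := by
    intro x hx
    apply Summable.of_norm_bounded (g := fun k => (ρ * R) * (‖a (k + 1)‖ / (Nat.factorial k : ℝ)))
      (ha.mul_left _)
    intro k
    rw [hf2def, norm_smul, hc2]
    have h1 : ‖conv (a (k + 1)) (convPow (fun u v : X => conv u v) x k)‖
        ≤ ρ * ‖a (k + 1)‖ * (R * (1 / 2) ^ k) := by
      calc ‖conv (a (k + 1)) (convPow (fun u v : X => conv u v) x k)‖
          ≤ ρ * ‖a (k + 1)‖ * ‖convPow (fun u v : X => conv u v) x k‖ := hbound _ _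
        _ ≤ ρ * ‖a (k + 1)‖ * (R * (1 / 2) ^ k) := by
            apply mul_le_mul_of_nonneg_left (hP x hx k) (by positivity)
    calc ((Nat.factorial (k + 1) : ℝ))⁻¹
          * ‖conv (a (k + 1)) (convPow (fun u v : X => conv u v) x k)‖
        ≤ ((Nat.factorial k : ℝ))⁻¹ * (ρ * ‖a (k + 1)‖ * (R * (1 / 2) ^ k)) := by
          apply mul_le_mul _ h1 (norm_nonneg _) (by positivity)
          apply inv_anti₀ (by positivity)
          exact_mod_cast Nat.factorial_le (Nat.le_succ k)
      _ ≤ ((Nat.factorial k : ℝ))⁻¹ * (ρ * ‖a (k + 1)‖ * (R * 1)) := by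
          apply mul_le_mul_of_nonneg_left _ (by positivity)
          apply mul_le_mul_of_nonneg_left _ (by positivity)
          apply mul_le_mul_of_nonneg_left _ hR0.le
          exact pow_le_one₀ (by norm_num) (by norm_num)
      _ = (ρ * R) * (‖a (k + 1)‖ / (Nat.factorial k : ℝ)) := by
          rw [div_eq_mul_inv]; ring
  -- the contraction estimate
  have key : ∀ x y : X, ‖x‖ ≤ R → ‖y‖ ≤ R →
      ‖Gmap (fun u v => conv u v) a x - Gmap (fun u v => conv u v) a y‖
        ≤ 5 / 12 * ‖x - y‖ := by
    intro x y hx hy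
    set d : ℝ := ‖x - y‖ with hddef
    have hd0 : 0 ≤ d := norm_nonneg _
    -- first series
    have h1 : ‖(∑' k, f1 x k) - ∑' k, f1 y k‖ ≤ 1 / 6 * d := by
      rw [← Summable.tsum_sub (hs1 x hx) (hs1 y hy)]
      have hgs : HasSum (fun k : ℕ => (d / 8) * (1 / 4 : ℝ) ^ k) (1 / 6 * d) := by
        have h := (hasSum_geometric_of_lt_one (r := (1/4 : ℝ)) (by norm_num)
          (by norm_num)).mul_left (d / 8)
        convert h using 1
        · rfl
        norm_num
        ring
      apply tsum_of_norm_bounded hgs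
      intro k
      have hPd := convPow_sub_le conv hρ hbound hR0.le hx hy (2 * k + 2)
      rw [hρR] at hPd
      have hsm : f1 x k - f1 y k
          = (((-1 : ℂ) ^ (k + 1)) / (Nat.factorial (2 * k + 3) : ℂ)) •
            (convPow (fun u v : X => conv u v) x (2 * k + 2)
              - convPow (fun u v : X => conv u v) y (2 * k + 2)) := by
        rw [hf1def, smul_sub]
      rw [hsm, norm_smul, hc1]
      have hfac : (2 : ℝ) * (2 * k + 3) ≤ ((Nat.factorial (2 * k + 3) : ℝ)) := by
        have h2 : (2 : ℕ) ≤ Nat.factorial (2 * k + 2) :=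
          le_trans (by norm_num) (Nat.factorial_le (show 2 ≤ 2 * k + 2 by omega))
        have : 2 * (2 * k + 3) ≤ Nat.factorial (2 * k + 3) := by
          rw [show 2 * k + 3 = (2 * k + 2) + 1 from rfl, Nat.factorial_succ]
          calc 2 * (2 * k + 2 + 1) = (2 * k + 2 + 1) * 2 := by ring
            _ ≤ (2 * k + 2 + 1) * Nat.factorial (2 * k + 2) := by
                exact Nat.mul_le_mul_left _ h2
        exact_mod_cast this
      have hfacpos : (0 : ℝ) < (Nat.factorial (2 * k + 3) : ℝ) := by
        exact_mod_cast Nat.factorial_pos _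
      have hkey : ((Nat.factorial (2 * k + 3) : ℝ))⁻¹ * ((2 * k + 2 : ℕ) + 1) ≤ 1 / 2 := by
        rw [inv_mul_le_iff₀ hfacpos]
        push_cast
        linarith
      calc ((Nat.factorial (2 * k + 3) : ℝ))⁻¹
            * ‖convPow (fun u v : X => conv u v) x (2 * k + 2)
              - convPow (fun u v : X => conv u v) y (2 * k + 2)‖
          ≤ ((Nat.factorial (2 * k + 3) : ℝ))⁻¹
            * (((2 * k + 2 : ℕ) + 1) * (1 / 2) ^ (2 * k + 2) * d) := by
            apply mul_le_mul_of_nonneg_left hPd (by positivity)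
        _ = (((Nat.factorial (2 * k + 3) : ℝ))⁻¹ * ((2 * k + 2 : ℕ) + 1))
            * ((1 / 2) ^ (2 * k + 2) * d) := by ring
        _ ≤ (1 / 2) * ((1 / 2) ^ (2 * k + 2) * d) := by
            apply mul_le_mul_of_nonneg_right hkey (by positivity)
        _ = (d / 8) * (1 / 4 : ℝ) ^ k := by
            rw [show 2 * k + 2 = 2 * (k + 1) by ring, pow_mul]
            norm_num [pow_succ]
            ring
    -- second series
    have h2 : ‖(∑' k, f2 x k) - ∑' k, f2 y k‖ ≤ 1 / 4 * d := by
      rw [← Summable.tsum_sub (hs2 x hx) (hs2 y hy)]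
      have hgs : HasSum (fun k : ℕ => (ρ * d) * (‖a (k + 1)‖ / (Nat.factorial k : ℝ)))
          ((ρ * d) * S) := ha.hasSum.mul_left _
      have hb : ∀ k : ℕ, ‖f2 x k - f2 y k‖
          ≤ (ρ * d) * (‖a (k + 1)‖ / (Nat.factorial k : ℝ)) := by
        intro k
        have hPd := convPow_sub_le conv hρ hbound hR0.le hx hy k
        rw [hρR] at hPd
        have hsm : f2 x k - f2 y k
            = ((Nat.factorial (k + 1) : ℂ))⁻¹ •
              conv (a (k + 1)) (convPow (fun u v : X => conv u v) x k
                - convPow (fun u v : X => conv u v) y k) := by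
          rw [hf2def, ← smul_sub, map_sub]
        rw [hsm, norm_smul, hc2]
        have hfacpos : (0 : ℝ) < (Nat.factorial (k + 1) : ℝ) := by
          exact_mod_cast Nat.factorial_pos _
        have hfe : ((Nat.factorial (k + 1) : ℝ))⁻¹ * ((k : ℝ) + 1)
            = ((Nat.factorial k : ℝ))⁻¹ := by
          rw [Nat.factorial_succ]
          push_cast
          rw [mul_inv]
          field_simp
        calc ((Nat.factorial (k + 1) : ℝ))⁻¹
              * ‖conv (a (k + 1)) (convPow (fun u v : X => conv u v) x k
                - convPow (fun u v : X => conv u v) y k)‖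
            ≤ ((Nat.factorial (k + 1) : ℝ))⁻¹
              * (ρ * ‖a (k + 1)‖ * (((k : ℕ) + 1) * (1 / 2) ^ k * d)) := by
              apply mul_le_mul_of_nonneg_left _ (by positivity)
              calc ‖conv (a (k + 1)) (convPow (fun u v : X => conv u v) x k
                    - convPow (fun u v : X => conv u v) y k)‖
                  ≤ ρ * ‖a (k + 1)‖ * ‖convPow (fun u v : X => conv u v) x k
                    - convPow (fun u v : X => conv u v) y k‖ := hbound _ _
                _ ≤ ρ * ‖a (k + 1)‖ * (((k : ℕ) + 1) * (1 / 2) ^ k * d) := by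
                    apply mul_le_mul_of_nonneg_left hPd (by positivity)
          _ = (((Nat.factorial (k + 1) : ℝ))⁻¹ * ((k : ℝ) + 1))
              * (ρ * ‖a (k + 1)‖ * ((1 / 2) ^ k * d)) := by push_cast; ring
          _ = ((Nat.factorial k : ℝ))⁻¹ * (ρ * ‖a (k + 1)‖ * ((1 / 2) ^ k * d)) := by
              rw [hfe]
          _ ≤ ((Nat.factorial k : ℝ))⁻¹ * (ρ * ‖a (k + 1)‖ * (1 * d)) := by
              apply mul_le_mul_of_nonneg_left _ (by positivity)
              apply mul_le_mul_of_nonneg_left _ (by positivity)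
              apply mul_le_mul_of_nonneg_right _ hd0
              exact pow_le_one₀ (by norm_num) (by norm_num)
          _ = (ρ * d) * (‖a (k + 1)‖ / (Nat.factorial k : ℝ)) := by
              rw [div_eq_mul_inv]; ring
      calc ‖∑' k, (f2 x k - f2 y k)‖ ≤ (ρ * d) * S := tsum_of_norm_bounded hgs hb
        _ ≤ (ρ * d) * (4 * ρ)⁻¹ := by
            apply mul_le_mul_of_nonneg_left hSle (by positivity)
        _ = 1 / 4 * d := by field_simp
    have hsplit : Gmap (fun u v => conv u v) a x - Gmap (fun u v => conv u v) a y
        = ((∑' k, f1 x k) - ∑' k, f1 y k) - ((∑' k, f2 x k) - ∑' k, f2 y k) := by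
      rw [hGm, hGm]; abel
    calc ‖Gmap (fun u v => conv u v) a x - Gmap (fun u v => conv u v) a y‖
        ≤ ‖(∑' k, f1 x k) - ∑' k, f1 y k‖ + ‖(∑' k, f2 x k) - ∑' k, f2 y k‖ := by
          rw [hsplit]; exact norm_sub_le _ _
      _ ≤ 1 / 6 * d + 1 / 4 * d := add_le_add h1 h2
      _ = 5 / 12 * d := by ring
  -- value at zero
  have hG0 : Gmap (fun u v => conv u v) a 0 = -(a 0) := by
    rw [hGm]
    have e1 : ∀ k : ℕ, f1 0 k = 0 := by
      intro k; rw [hf1def]; simp [convPow_zero_eq]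
    have e2 : ∀ k : ℕ, f2 0 k = 0 := by
      intro k; rw [hf2def]; simp [convPow_zero_eq]
    simp [tsum_congr e1, tsum_congr e2]
  -- invariance of the ball
  have hinv : ∀ x : X, ‖x‖ ≤ R → ‖Gmap (fun u v => conv u v) a x‖ ≤ R := by
    intro x hx
    have h0 : ‖(0 : X)‖ ≤ R := by simp [hR0.le]
    have hk := key x 0 hx h0
    rw [hG0, sub_zero] at hk
    calc ‖Gmap (fun u v => conv u v) a x‖
        = ‖(Gmap (fun u v => conv u v) a x - -(a 0)) + -(a 0)‖ := by
          rw [sub_add_cancel]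
      _ ≤ ‖Gmap (fun u v => conv u v) a x - -(a 0)‖ + ‖-(a 0)‖ := norm_add_le _ _
      _ ≤ 5 / 12 * ‖x‖ + ‖a 0‖ := by rw [norm_neg]; exact add_le_add hk le_rfl
      _ ≤ 5 / 12 * R + R / 2 := by
          apply add_le_add (by linarith) (by rw [← hr0]; exact ha0)
      _ ≤ R := by linarith
  -- fixed point via contraction on the closed ball
  set s : Set X := Metric.closedBall (0 : X) R with hsdef
  have hmem : ∀ x : X, x ∈ s ↔ ‖x‖ ≤ R := fun x => mem_closedBall_zero_iff
  haveI : CompleteSpace s := Metric.isClosed_closedBall.completeSpace_coe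
  haveI : Nonempty s := ⟨⟨0, (hmem 0).mpr (by simp [hR0.le])⟩⟩
  set F : s → s := fun p =>
    ⟨Gmap (fun u v => conv u v) a p.1, (hmem _).mpr (hinv p.1 ((hmem _).mp p.2))⟩ with hFdef
  have hlip : LipschitzWith (5 / 12 : NNReal) F := by
    apply LipschitzWith.of_dist_le_mul
    intro p q
    rw [Subtype.dist_eq, Subtype.dist_eq, dist_eq_norm, dist_eq_norm]
    have := key p.1 q.1 ((hmem _).mp p.2) ((hmem _).mp q.2)
    calc ‖(F p).1 - (F q).1‖ ≤ 5 / 12 * ‖p.1 - q.1‖ := this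
      _ = ((5 / 12 : NNReal) : ℝ) * ‖p.1 - q.1‖ := by norm_num
  have hcw : ContractingWith (5 / 12 : NNReal) F := by
    refine ⟨?_, hlip⟩
    rw [← NNReal.coe_lt_coe]
    push_cast
    norm_num
  set z : s := ContractingWith.fixedPoint F hcw with hzdef
  have hzfix : F z = z := hcw.fixedPoint_isFixedPt
  have hz1 : ‖(z : X)‖ ≤ R := (hmem _).mp z.2
  have hz2 : (z : X) = Gmap (fun u v => conv u v) a (z : X) := by
    have := congrArg Subtype.val hzfix
    exact this.symm
  refine ⟨(z : X), ⟨hz1, hz2⟩, ?_⟩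
  rintro y ⟨hy1, hy2⟩
  have hk := key y (z : X) hy1 hz1
  rw [← hy2, ← hz2] at hk
  have : ‖y - (z : X)‖ = 0 := le_antisymm (by linarith) (norm_nonneg _)
  have := sub_eq_zero.mp (norm_eq_zero.mp this)
  exact this
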